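/- A map Ψ : C(S^{n-1}) → C(S^{n-1}) is a monotone (nonnegative functions map to nonnegative functions), linear map that intertwines rotations (Ψ(f ∘ ϑ^{-1}) = (Ψf) ∘ ϑ^{-1} for all ϑ ∈ SO(n)) if and only if there exists a nonnegative zonal finite Borel measure μ on S^{n-1} such that Ψf = f ∗ μ for all f, where (f ∗ μ)(η e) = ∫_{S^{n-1}} f(ηu) dμ(u) for η ∈ SO(n). -/

import Mathlib

open MeasureTheory Metric

set_option linter.unusedSectionVars false
set_option linter.unusedVariables false

open MeasureTheory Set TopologicalSpace
open scoped ENNReal NNReal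

noncomputable section RMKsec

variable {X : Type*} [TopologicalSpace X] [CompactSpace X] [T2Space X]
  [MeasurableSpace X] [BorelSpace X]

/-- Test functions for the Riesz content of a set `K`. -/
def rieszTest (K : Set X) : Set C(X, ℝ) :=
  {f | (∀ x, 0 ≤ f x) ∧ ∀ x ∈ K, 1 ≤ f x}

variable (Λ : C(X, ℝ) →ₗ[ℝ] ℝ)

/-- The Riesz content of a set. -/
def rcont (K : Set X) : ℝ := sInf (Λ '' rieszTest K)

variable (hΛ : ∀ f : C(X, ℝ), (∀ x, 0 ≤ f x) → 0 ≤ Λ f)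

section basic
include hΛ

theorem rieszΛ_mono {f g : C(X, ℝ)} (h : ∀ x, f x ≤ g x) : Λ f ≤ Λ g := by
  have := hΛ (g - f) (fun x => by simpa using h x)
  rw [map_sub] at this; linarith

theorem one_mem_rieszTest (K : Set X) : (1 : C(X, ℝ)) ∈ rieszTest K :=
  ⟨fun x => zero_le_one, fun x _ => le_refl 1⟩

theorem rcont_nonneg (K : Set X) : 0 ≤ rcont Λ K := by
  refine le_csInf ⟨Λ 1, ⟨1, one_mem_rieszTest Λ hΛ K, rfl⟩⟩ ?_
  rintro r ⟨f, hf, rfl⟩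
  exact hΛ f hf.1

theorem rcont_bddBelow (K : Set X) : BddBelow (Λ '' rieszTest K) :=
  ⟨0, by rintro r ⟨f, hf, rfl⟩; exact hΛ f hf.1⟩

theorem rcont_le {K : Set X} {f : C(X, ℝ)} (hf : f ∈ rieszTest K) : rcont Λ K ≤ Λ f :=
  csInf_le (rcont_bddBelow Λ hΛ K) ⟨f, hf, rfl⟩

theorem le_rcont {K : Set X} {c : ℝ} (h : ∀ f ∈ rieszTest K, c ≤ Λ f) : c ≤ rcont Λ K :=
  le_csInf ⟨Λ 1, ⟨1, one_mem_rieszTest Λ hΛ K, rfl⟩⟩ (by rintro r ⟨f, hf, rfl⟩; exact h f hf)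

theorem rcont_mono {K₁ K₂ : Set X} (h : K₁ ⊆ K₂) : rcont Λ K₁ ≤ rcont Λ K₂ := by
  apply le_rcont Λ hΛ
  intro f hf
  exact rcont_le Λ hΛ (⟨hf.1, fun x hx => hf.2 x (h hx)⟩ : f ∈ rieszTest K₁)

theorem rcont_exists {K : Set X} {ε : ℝ} (hε : 0 < ε) :
    ∃ f ∈ rieszTest (X := X) K, Λ f < rcont Λ K + ε := by
  obtain ⟨r, ⟨f, hf, rfl⟩, hr⟩ := exists_lt_of_csInf_lt
    (⟨Λ 1, ⟨1, one_mem_rieszTest Λ hΛ K, rfl⟩⟩ : (Λ '' rieszTest K).Nonempty)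
    (lt_add_of_pos_right (rcont Λ K) hε)
  exact ⟨f, hf, hr⟩

theorem rcont_union_le (K₁ K₂ : Set X) :
    rcont Λ (K₁ ∪ K₂) ≤ rcont Λ K₁ + rcont Λ K₂ := by
  refine le_of_forall_pos_le_add fun ε hε => ?_
  obtain ⟨f₁, hf₁, hΛf₁⟩ := rcont_exists Λ hΛ (K := K₁) (half_pos hε)
  obtain ⟨f₂, hf₂, hΛf₂⟩ := rcont_exists Λ hΛ (K := K₂) (half_pos hε)
  have : f₁ + f₂ ∈ rieszTest (K₁ ∪ K₂) := by
    constructor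
    · intro x; simpa using add_nonneg (hf₁.1 x) (hf₂.1 x)
    · rintro x (hx | hx)
      · simpa using le_add_of_le_of_nonneg (hf₁.2 x hx) (hf₂.1 x)
      · simpa using le_add_of_nonneg_of_le (hf₁.1 x) (hf₂.2 x hx)
  calc rcont Λ (K₁ ∪ K₂) ≤ Λ (f₁ + f₂) := rcont_le Λ hΛ this
    _ = Λ f₁ + Λ f₂ := map_add _ _ _
    _ ≤ rcont Λ K₁ + rcont Λ K₂ + ε := by linarith

theorem rcont_union_disjoint {K₁ K₂ : Set X} (h₁ : IsCompact K₁) (h₂ : IsCompact K₂)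
    (hd : Disjoint K₁ K₂) : rcont Λ K₁ + rcont Λ K₂ ≤ rcont Λ (K₁ ∪ K₂) := by
  apply le_rcont Λ hΛ
  intro f hf
  obtain ⟨g, hg1, hg2, hg01⟩ := exists_continuous_zero_one_of_isCompact h₁ h₂.isClosed hd
  have key1 : f * (1 - g) ∈ rieszTest K₁ := by
    constructor
    · intro x
      simpa using mul_nonneg (hf.1 x) (by simpa using (hg01 x).2)
    · intro x hx
      have : g x = 0 := hg1 hx
      simpa [this] using hf.2 x (Or.inl hx)
  have key2 : f * g ∈ rieszTest K₂ := by
    constructor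
    · intro x
      exact mul_nonneg (hf.1 x) (hg01 x).1
    · intro x hx
      have : g x = 1 := hg2 hx
      simpa [this] using hf.2 x (Or.inr hx)
  have : Λ (f * (1 - g)) + Λ (f * g) = Λ f := by
    rw [← map_add]; congr 1; ext x; simp; ring
  have h1 := rcont_le Λ hΛ key1
  have h2 := rcont_le Λ hΛ key2
  linarith

end basic

/-- The Riesz content as a `Content`. -/
def rieszCont : Content X where
  toFun K := Real.toNNReal (rcont Λ K)
  mono' K₁ K₂ h := Real.toNNReal_le_toNNReal (rcont_mono Λ hΛ h)
  sup_disjoint' K₁ K₂ hd _ _ := by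
    have h1 := rcont_union_le Λ hΛ (K₁ : Set X) K₂
    have h2 := rcont_union_disjoint Λ hΛ K₁.2 K₂.2 hd
    have he : rcont Λ ((K₁ ⊔ K₂ : Compacts X) : Set X) = rcont Λ K₁ + rcont Λ K₂ := by
      change rcont Λ ((K₁ : Set X) ∪ K₂) = _
      exact le_antisymm h1 h2
    simp only [he]
    rw [Real.toNNReal_add (rcont_nonneg Λ hΛ _) (rcont_nonneg Λ hΛ _)]
  sup_le' K₁ K₂ := by
    have h1 := rcont_union_le Λ hΛ (K₁ : Set X) K₂
    calc Real.toNNReal (rcont Λ ((K₁ ⊔ K₂ : Compacts X) : Set X))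
        ≤ Real.toNNReal (rcont Λ K₁ + rcont Λ K₂) := Real.toNNReal_le_toNNReal h1
      _ = Real.toNNReal (rcont Λ K₁) + Real.toNNReal (rcont Λ K₂) :=
          Real.toNNReal_add (rcont_nonneg Λ hΛ _) (rcont_nonneg Λ hΛ _)

/-- The Riesz measure. -/
def rieszμ : Measure X := (rieszCont Λ hΛ).measure

theorem rieszμ_outerRegular : (rieszμ Λ hΛ).OuterRegular := Content.outerRegular _

/-- Key upper bound: the measure of a compact set is at most `Λ f` for a test function. -/
theorem rieszμ_compact_le {K : Set X} (hK : IsCompact K) {f : C(X, ℝ)}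
    (hf : f ∈ rieszTest K) : rieszμ Λ hΛ K ≤ ENNReal.ofReal (Λ f) := by
  have hΛf : 0 ≤ Λ f := hΛ f hf.1
  refine ENNReal.le_of_forall_pos_le_add fun ε hε _ => ?_
  set δ : ℝ := ε / (Λ f + 1) with hδ
  have hδpos : 0 < δ := div_pos hε (by linarith)
  set α : ℝ := (1 + δ)⁻¹ with hα
  have hα0 : 0 < α := inv_pos.2 (by linarith)
  have hα1 : α < 1 := by
    rw [hα]
    rw [inv_lt_one_iff₀]
    right; linarith
  set U : Set X := f ⁻¹' Ioi α with hUdef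
  have hUopen : IsOpen U := isOpen_Ioi.preimage f.continuous
  have hKU : K ⊆ U := fun x hx => lt_of_lt_of_le hα1 (hf.2 x hx)
  have h1 : rieszμ Λ hΛ K ≤ rieszμ Λ hΛ U := measure_mono hKU
  have h2 : rieszμ Λ hΛ U = (rieszCont Λ hΛ).innerContent ⟨U, hUopen⟩ := by
    rw [rieszμ, Content.measure_apply _ hUopen.measurableSet,
      Content.outerMeasure_of_isOpen _ U hUopen]
  have h3 : (rieszCont Λ hΛ).innerContent ⟨U, hUopen⟩ ≤ ENNReal.ofReal (Λ f + ε) := by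
    rw [Content.innerContent]
    refine iSup₂_le fun K' hK' => ?_
    have htest : (α⁻¹ : ℝ) • f ∈ rieszTest (K' : Set X) := by
      constructor
      · intro x
        simp only [ContinuousMap.coe_smul, Pi.smul_apply, smul_eq_mul]
        exact mul_nonneg (inv_nonneg.2 hα0.le) (hf.1 x)
      · intro x hx
        have hfx : α < f x := hK' hx
        simp only [ContinuousMap.coe_smul, Pi.smul_apply, smul_eq_mul]
        rw [← inv_mul_cancel₀ hα0.ne']
        exact mul_le_mul_of_nonneg_left hfx.le (inv_nonneg.2 hα0.le)
    have hle : rcont Λ (K' : Set X) ≤ Λ ((α⁻¹ : ℝ) • f) := rcont_le Λ hΛ htest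
    have hval : Λ ((α⁻¹ : ℝ) • f) = α⁻¹ * Λ f := by rw [LinearMap.map_smul, smul_eq_mul]
    have hδe : δ * Λ f ≤ ε := by
      have hε0 : (0:ℝ) ≤ ε := ε.2
      rw [hδ, div_mul_eq_mul_div, div_le_iff₀ (by linarith)]
      nlinarith
    have hbound : α⁻¹ * Λ f ≤ Λ f + ε := by
      rw [hα, inv_inv]
      nlinarith
    show ((rieszCont Λ hΛ) K' : ℝ≥0∞) ≤ ENNReal.ofReal (Λ f + ε)
    have : (rieszCont Λ hΛ) K' = Real.toNNReal (rcont Λ (K' : Set X)) := rfl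
    rw [this, ENNReal.ofReal]
    exact ENNReal.coe_le_coe.2 (Real.toNNReal_le_toNNReal (by linarith))
  calc rieszμ Λ hΛ K ≤ ENNReal.ofReal (Λ f + ε) := h1.trans (h2.trans_le h3)
    _ = ENNReal.ofReal (Λ f) + ENNReal.ofReal ε := ENNReal.ofReal_add hΛf (by positivity)
    _ = ENNReal.ofReal (Λ f) + ε := by rw [ENNReal.ofReal_coe_nnreal]

theorem rieszμ_le_of_subordinate {U : Set X} (hU : IsOpen U) {h : C(X, ℝ)}
    (h0 : ∀ x, 0 ≤ h x) (h1 : ∀ x, h x ≤ 1) (hsupp : tsupport h ⊆ U) :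
    ENNReal.ofReal (Λ h) ≤ rieszμ Λ hΛ U := by
  set K : Compacts X := ⟨tsupport h, (isClosed_tsupport h).isCompact⟩ with hK
  have hle : Λ h ≤ rcont Λ (K : Set X) := by
    refine le_rcont Λ hΛ fun g hg => ?_
    refine rieszΛ_mono Λ hΛ fun x => ?_
    by_cases hx : x ∈ tsupport h
    · exact (h1 x).trans (hg.2 x hx)
    · rw [image_eq_zero_of_notMem_tsupport hx]
      exact hg.1 x
  have h2 : (ENNReal.ofReal (Λ h) : ℝ≥0∞) ≤ (rieszCont Λ hΛ) K := by
    rw [ENNReal.ofReal]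
    exact ENNReal.coe_le_coe.2 (Real.toNNReal_le_toNNReal hle)
  have h3 : ((rieszCont Λ hΛ) K : ℝ≥0∞) ≤ (rieszCont Λ hΛ).innerContent ⟨U, hU⟩ :=
    (rieszCont Λ hΛ).le_innerContent K ⟨U, hU⟩ hsupp
  have h4 : (rieszCont Λ hΛ).innerContent ⟨U, hU⟩ = rieszμ Λ hΛ U := by
    rw [rieszμ, Content.measure_apply _ hU.measurableSet,
      Content.outerMeasure_of_isOpen _ U hU]
  exact h2.trans (h3.trans h4.le)


theorem rieszμ_finite : IsFiniteMeasure (rieszμ Λ hΛ) := by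
  constructor
  exact (rieszμ_compact_le Λ hΛ isCompact_univ (one_mem_rieszTest Λ hΛ univ)).trans_lt
    ENNReal.ofReal_lt_top

theorem rieszμ_univ_le : ((rieszμ Λ hΛ) univ).toReal ≤ Λ 1 := by
  have h := rieszμ_compact_le Λ hΛ isCompact_univ (one_mem_rieszTest Λ hΛ univ)
  have h2 := ENNReal.toReal_mono ENNReal.ofReal_ne_top h
  rwa [ENNReal.toReal_ofReal (hΛ 1 fun _ => zero_le_one)] at h2

theorem rieszΛ_key (f : C(X, ℝ)) (hf : ∀ x, 0 ≤ f x) {ε : ℝ} (hε : 0 < ε) (hε1 : ε ≤ 1) :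
    Λ f ≤ ∫ x, f x ∂(rieszμ Λ hΛ) +
      ε * (2 * ((rieszμ Λ hΛ) univ).toReal + ‖f‖ + 2) := by
  haveI : IsFiniteMeasure (rieszμ Λ hΛ) := rieszμ_finite Λ hΛ
  haveI : (rieszμ Λ hΛ).OuterRegular := rieszμ_outerRegular Λ hΛ
  set μ := rieszμ Λ hΛ with hμdef
  set b : ℝ := ‖f‖ with hb
  have hb0 : 0 ≤ b := norm_nonneg f
  have hfb : ∀ x, f x ≤ b := fun x => (abs_le.1 (f.norm_coe_le_norm x)).2
  have hint : Integrable f μ :=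
    f.continuous.integrable_of_hasCompactSupport ((isClosed_tsupport _).isCompact)
  set N : ℕ := ⌈b / ε⌉₊ + 1 with hN
  have hN0 : 0 < N := Nat.succ_pos _
  have hNr : (N : ℝ) ≤ b / ε + 2 := by
    have := Nat.ceil_lt_add_one (div_nonneg hb0 hε.le)
    push_cast [hN]
    linarith
  set y : ℕ → ℝ := fun i => i * ε - ε with hy
  have hymono : ∀ i j : ℕ, i ≤ j → y i ≤ y j := by
    intro i j hij
    simp only [hy]
    have : (i : ℝ) ≤ j := Nat.cast_le.2 hij
    nlinarith
  have hystep : ∀ i : ℕ, y (i + 1) = y i + ε := by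
    intro i; simp only [hy]; push_cast; ring
  set E : Fin N → Set X := fun i => f ⁻¹' Ioc (y i) (y (i + 1)) with hE
  have hEmeas : ∀ i, MeasurableSet (E i) := fun i =>
    f.continuous.measurable measurableSet_Ioc
  have hEdisj : Pairwise (Function.onFun Disjoint E) := by
    intro i j hij
    refine Disjoint.preimage _ ?_
    rw [Set.Ioc_disjoint_Ioc]
    rcases lt_or_gt_of_ne (fun h => hij (Fin.ext (by exact_mod_cast congrArg (Fin.val) h))) with h | h
    · calc min (y (↑i + 1)) (y (↑j + 1)) ≤ y (↑i + 1) := min_le_left _ _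
        _ ≤ y ↑j := hymono _ _ (by omega)
        _ ≤ max (y ↑i) (y ↑j) := le_max_right _ _
    · calc min (y (↑i + 1)) (y (↑j + 1)) ≤ y (↑j + 1) := min_le_right _ _
        _ ≤ y ↑i := hymono _ _ (by omega)
        _ ≤ max (y ↑i) (y ↑j) := le_max_left _ _
  have hcover : ∀ x : X, ∃ i : Fin N, x ∈ E i := by
    intro x
    set t : ℝ := f x with ht
    have ht0 : 0 ≤ t := hf x
    have htb : t ≤ b := hfb x
    have hiN : ⌈t / ε⌉₊ < N := by
      rw [hN]
      exact Nat.lt_succ_of_le (Nat.ceil_le_ceil (by gcongr))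
    refine ⟨⟨⌈t / ε⌉₊, hiN⟩, ?_⟩
    simp only [hE, mem_preimage, mem_Ioc]
    constructor
    · rcases Nat.eq_zero_or_pos ⌈t / ε⌉₊ with h0 | hpos
      · simp only [h0]
        simp only [hy]
        push_cast
        linarith
      · have h2 : ((⌈t / ε⌉₊ - 1 : ℕ) : ℝ) < t / ε := Nat.lt_ceil.1 (Nat.sub_lt hpos one_pos)
        have hcast : ((⌈t / ε⌉₊ - 1 : ℕ) : ℝ) = (⌈t / ε⌉₊ : ℝ) - 1 := by
          have h1 : (1 : ℕ) ≤ ⌈t / ε⌉₊ := hpos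
          push_cast [h1]
          ring
        rw [hcast] at h2
        have h3 : ((⌈t / ε⌉₊ : ℝ) - 1) * ε < t := (lt_div_iff₀ hε).1 h2
        simp only [hy]
        nlinarith
    · have : t / ε ≤ (⌈t / ε⌉₊ : ℝ) := Nat.le_ceil _
      simp only [hy]
      push_cast
      rw [div_le_iff₀ hε] at this
      linarith
  have hV : ∀ i : Fin N, ∃ V : Set X, IsOpen V ∧ E i ⊆ V ∧
      μ V ≤ μ (E i) + ENNReal.ofReal (ε / N) ∧ ∀ x ∈ V, f x < y (↑i + 1) + ε := by
    intro i
    have hεN : ENNReal.ofReal (ε / N) ≠ 0 := by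
      simp only [ne_eq, ENNReal.ofReal_eq_zero, not_le]
      exact div_pos hε (Nat.cast_pos.mpr hN0)
    obtain ⟨U, hEU, hUopen, hUlt⟩ := (E i).exists_isOpen_lt_add (measure_ne_top μ _) hεN
    refine ⟨U ∩ f ⁻¹' Iio (y (↑i + 1) + ε), hUopen.inter (isOpen_Iio.preimage f.continuous),
      ?_, ?_, ?_⟩
    · intro x hx
      have hx' : f x ∈ Ioc (y ↑i) (y (↑i + 1)) := hx
      exact ⟨hEU hx, by simp only [mem_preimage, mem_Iio]; linarith [hx'.2]⟩
    · exact (measure_mono inter_subset_left).trans hUlt.le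
    · intro x hx
      simpa using hx.2
  choose V hVopen hEV hVle hVlt using hV
  obtain ⟨p, hp⟩ := PartitionOfUnity.exists_isSubordinate isClosed_univ V hVopen
    (by
      intro x _
      obtain ⟨i, hi⟩ := hcover x
      exact mem_iUnion.2 ⟨i, hEV i hi⟩)
  have hsum1 : ∀ x : X, ∑ i : Fin N, p i x = 1 := by
    intro x
    have := p.sum_eq_one (mem_univ x)
    rwa [finsum_eq_sum_of_fintype] at this
  have hfdecomp : Λ f = ∑ i : Fin N, Λ (p i * f) := by
    rw [← map_sum]
    congr 1
    ext x
    simp only [ContinuousMap.sum_apply, ContinuousMap.mul_apply]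
    rw [← Finset.sum_mul, hsum1, one_mul]
  set m : Fin N → ℝ := fun i => (μ (E i)).toReal with hm
  have hm0 : ∀ i, 0 ≤ m i := fun i => ENNReal.toReal_nonneg
  have hterm : ∀ i : Fin N, Λ (p i * f) ≤ (y (↑i + 1) + ε) * Λ (p i) := by
    intro i
    have hpos : ∀ x, 0 ≤ ((y (↑i + 1) + ε) • (p i : C(X, ℝ)) - p i * f) x := by
      intro x
      simp only [ContinuousMap.sub_apply, ContinuousMap.smul_apply, smul_eq_mul,
        ContinuousMap.mul_apply]
      by_cases hx : p i x = 0
      · simp [hx]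
      · have hxs : x ∈ tsupport ⇑(p i) := subset_closure hx
        have hfx : f x < y (↑i + 1) + ε := hVlt i x (hp i hxs)
        have hpx : 0 ≤ p i x := p.nonneg i x
        nlinarith
    have h := hΛ _ hpos
    rw [map_sub, LinearMap.map_smul, smul_eq_mul] at h
    linarith
  have hΛp0 : ∀ i : Fin N, 0 ≤ Λ (p i) := fun i => hΛ _ (p.nonneg i)
  have hΛple : ∀ i : Fin N, Λ (p i) ≤ m i + ε / N := by
    intro i
    have hB := rieszμ_le_of_subordinate Λ hΛ (hVopen i) (p.nonneg i) (p.le_one i) (hp i)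
    have h2 : ENNReal.ofReal (Λ (p i)) ≤ μ (E i) + ENNReal.ofReal (ε / N) :=
      hB.trans (hVle i)
    have h3 := ENNReal.toReal_mono
      (ENNReal.add_ne_top.2 ⟨measure_ne_top μ _, ENNReal.ofReal_ne_top⟩) h2
    rw [ENNReal.toReal_ofReal (hΛp0 i), ENNReal.toReal_add (measure_ne_top μ _)
      ENNReal.ofReal_ne_top, ENNReal.toReal_ofReal (by positivity)] at h3
    exact h3
  have hc0 : ∀ i : Fin N, 0 ≤ y (↑i + 1) + ε := by
    intro i
    have h : y (↑i + 1) + ε = (((i : ℕ) : ℝ) + 1) * ε := by simp only [hy]; push_cast; ring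
    rw [h]; positivity
  have hcb : ∀ i : Fin N, y (↑i + 1) + ε ≤ b + 2 := by
    intro i
    have hiN : (↑i : ℕ) + 1 ≤ N := i.2
    have h1 : ((↑i : ℕ) + 1 : ℝ) ≤ (N : ℝ) := by exact_mod_cast hiN
    have h2 : y (↑i + 1) + ε = (((i : ℕ) : ℝ) + 1) * ε := by simp only [hy]; push_cast; ring
    have h4 : (N : ℝ) * ε ≤ b + 2 * ε := by
      have h5 : (N : ℝ) * ε ≤ (b / ε + 2) * ε := by nlinarith
      have h6 : (b / ε + 2) * ε = b + 2 * ε := by field_simp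
      linarith
    nlinarith
  have hchain : Λ f ≤ ∑ i : Fin N, (y (↑i + 1) + ε) * (m i + ε / N) := by
    rw [hfdecomp]
    refine Finset.sum_le_sum fun i _ => (hterm i).trans ?_
    exact mul_le_mul_of_nonneg_left (hΛple i) (hc0 i)
  have hsplit : (∑ i : Fin N, (y (↑i + 1) + ε) * (m i + ε / N)) =
      (∑ i : Fin N, y ↑i * m i) + 2 * ε * (∑ i : Fin N, m i)
        + ∑ i : Fin N, (y (↑i + 1) + ε) * (ε / N) := by
    rw [Finset.mul_sum, ← Finset.sum_add_distrib, ← Finset.sum_add_distrib]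
    refine Finset.sum_congr rfl fun i _ => ?_
    rw [hystep ↑i]
    ring
  have ha : (∑ i : Fin N, y ↑i * m i) ≤ ∫ x, f x ∂μ := by
    have hunion : (⋃ i, E i) = univ := by
      refine eq_univ_of_forall fun x => ?_
      obtain ⟨i, hi⟩ := hcover x
      exact mem_iUnion.2 ⟨i, hi⟩
    have hI : ∫ x, f x ∂μ = ∑ i : Fin N, ∫ x in E i, f x ∂μ := by
      rw [← setIntegral_univ, ← hunion,
        integral_iUnion_fintype hEmeas hEdisj fun i => hint.integrableOn]
    rw [hI]
    refine Finset.sum_le_sum fun i _ => ?_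
    refine setIntegral_ge_of_const_le_real (hEmeas i) (measure_ne_top μ _) ?_ hint.integrableOn
    intro x hx
    have hx' : f x ∈ Ioc (y ↑i) (y (↑i + 1)) := hx
    exact hx'.1.le
  have hbsum : (∑ i : Fin N, m i) = (μ univ).toReal := by
    have hunion : (⋃ i, E i) = univ := by
      refine eq_univ_of_forall fun x => ?_
      obtain ⟨i, hi⟩ := hcover x
      exact mem_iUnion.2 ⟨i, hi⟩
    have h1 : μ univ = ∑ i : Fin N, μ (E i) := by
      rw [← hunion, measure_iUnion hEdisj hEmeas, tsum_fintype]
    rw [h1, ENNReal.toReal_sum fun i _ => measure_ne_top μ _]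
  have hcsum : (∑ i : Fin N, (y (↑i + 1) + ε) * (ε / N)) ≤ ε * (b + 2) := by
    have hNne : (N : ℝ) ≠ 0 := Nat.cast_ne_zero.2 hN0.ne'
    calc (∑ i : Fin N, (y (↑i + 1) + ε) * (ε / N))
        ≤ ∑ _i : Fin N, (b + 2) * (ε / N) := by
          refine Finset.sum_le_sum fun i _ => ?_
          exact mul_le_mul_of_nonneg_right (hcb i) (by positivity)
      _ = (N : ℝ) * ((b + 2) * (ε / N)) := by
          rw [Finset.sum_const, Finset.card_univ, Fintype.card_fin, nsmul_eq_mul]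
      _ = ε * (b + 2) := by field_simp
  have hM0 : 0 ≤ (μ univ).toReal := ENNReal.toReal_nonneg
  have hfinal : ε * (2 * (μ univ).toReal + b + 2)
      = 2 * ε * (μ univ).toReal + ε * (b + 2) := by ring
  have h2eb : 2 * ε * (∑ i : Fin N, m i) = 2 * ε * (μ univ).toReal := by rw [hbsum]
  linarith [hchain, hsplit, ha, hcsum]

theorem rieszΛ_le_integral (f : C(X, ℝ)) (hf : ∀ x, 0 ≤ f x) :
    Λ f ≤ ∫ x, f x ∂(rieszμ Λ hΛ) := by
  set M : ℝ := ((rieszμ Λ hΛ) univ).toReal with hM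
  set C : ℝ := 2 * M + ‖f‖ + 2 with hC
  have hC0 : 0 < C := by
    have : 0 ≤ M := ENNReal.toReal_nonneg
    have := norm_nonneg f
    rw [hC]; linarith
  refine le_of_forall_pos_le_add fun δ hδ => ?_
  set ε : ℝ := min 1 (δ / C) with hε
  have hε0 : 0 < ε := lt_min one_pos (div_pos hδ hC0)
  have hε1 : ε ≤ 1 := min_le_left _ _
  have hkey := rieszΛ_key Λ hΛ f hf hε0 hε1
  have h2 : ε * C ≤ δ := by
    have h3 : ε ≤ δ / C := min_le_right _ _
    calc ε * C ≤ (δ / C) * C := by nlinarith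
      _ = δ := by field_simp
  rw [← hM, ← hC] at hkey
  linarith

theorem rieszΛ_eq_integral (f : C(X, ℝ)) : Λ f = ∫ x, f x ∂(rieszμ Λ hΛ) := by
  haveI : IsFiniteMeasure (rieszμ Λ hΛ) := rieszμ_finite Λ hΛ
  have key : ∀ g : C(X, ℝ), Λ g ≤ ∫ x, g x ∂(rieszμ Λ hΛ) := by
    intro g
    set c : ℝ := ‖g‖ with hc
    have hc0 : 0 ≤ c := norm_nonneg g
    have hint : Integrable g (rieszμ Λ hΛ) :=
      g.continuous.integrable_of_hasCompactSupport ((isClosed_tsupport _).isCompact)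
    have h1 : ∀ x, 0 ≤ (g + c • (1 : C(X, ℝ))) x := by
      intro x
      have := (abs_le.1 (g.norm_coe_le_norm x)).1
      simp only [ContinuousMap.add_apply, ContinuousMap.smul_apply, ContinuousMap.one_apply,
        smul_eq_mul, mul_one]
      linarith
    have h2 := rieszΛ_le_integral Λ hΛ (g + c • 1) h1
    have h3 : Λ (g + c • 1) = Λ g + c * Λ 1 := by
      rw [map_add, LinearMap.map_smul, smul_eq_mul]
    have h4 : ∫ x, (g + c • (1 : C(X, ℝ))) x ∂(rieszμ Λ hΛ)
        = (∫ x, g x ∂(rieszμ Λ hΛ)) + c * ((rieszμ Λ hΛ) univ).toReal := by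
      have : (fun x => (g + c • (1 : C(X, ℝ))) x) = fun x => g x + c := by
        ext x; simp
      rw [this, integral_add hint (integrable_const c), integral_const, smul_eq_mul, mul_comm, measureReal_def]
    have h5 := rieszμ_univ_le Λ hΛ
    rw [h3, h4] at h2
    nlinarith
  have h1 := key f
  have h2 := key (-f)
  rw [map_neg] at h2
  have h3 : ∫ x, (-f) x ∂(rieszμ Λ hΛ) = -∫ x, f x ∂(rieszμ Λ hΛ) := by
    have : (fun x => (-f) x) = fun x => -(f x) := by ext x; simp
    rw [this, integral_neg]
  rw [h3] at h2
  linarith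

end RMKsec

noncomputable section

/-- Euclidean space ℝⁿ. -/
abbrev Euc (n : ℕ) := EuclideanSpace ℝ (Fin n)

/-- The unit sphere S^{n-1} ⊂ ℝⁿ. -/
abbrev Sph (n : ℕ) := Metric.sphere (0 : Euc n) 1

/-- A map Ψ : C(S^{n-1}) → C(S^{n-1}) is a monotone, linear map intertwining
rotations if and only if there is a nonnegative zonal finite Borel measure μ on
S^{n-1} with Ψf = f ∗ μ, i.e. (Ψf)(ηe) = ∫ f(ηu) dμ(u).  The rotation group SO(n)
is taken as an abstract topological group G acting transitively on the sphere with
pole e; "zonal" means invariant under the stabilizer of e. -/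
theorem stmt2 (n : ℕ) (hn : 3 ≤ n)
    (G : Type*) [Group G] [TopologicalSpace G] [IsTopologicalGroup G]
    [MeasurableSpace G] [BorelSpace G]
    (act : G → Sph n → Sph n)
    (hact_one : ∀ u, act 1 u = u)
    (hact_mul : ∀ η τ u, act (η * τ) u = act η (act τ u))
    (hact_cont : Continuous fun p : G × Sph n => act p.1 p.2)
    (e : Sph n)
    (htrans : ∀ u : Sph n, ∃ η : G, act η e = u)
    (Ψ : C(Sph n, ℝ) →ₗ[ℝ] C(Sph n, ℝ)) :
    -- Ψ is monotone and intertwines rotations …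
    ((∀ f : C(Sph n, ℝ), (∀ u, 0 ≤ f u) → ∀ u, 0 ≤ Ψ f u) ∧
      (∀ (ϑ : G) (f g : C(Sph n, ℝ)), (∀ u, g u = f (act ϑ⁻¹ u)) →
        ∀ u, Ψ g u = Ψ f (act ϑ⁻¹ u)))
    ↔ -- … iff Ψ is convolution with a nonnegative zonal finite measure μ
    (∃ μ : Measure (Sph n), IsFiniteMeasure μ ∧
      (∀ ϑ : G, act ϑ e = e → μ.map (act ϑ) = μ) ∧
      ∀ (f : C(Sph n, ℝ)) (η : G), Ψ f (act η e) = ∫ u, f (act η u) ∂μ) := by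
  have hactcont : ∀ η : G, Continuous (act η) := fun η =>
    hact_cont.comp (Continuous.prodMk_right η)
  constructor
  · rintro ⟨hmono, hint⟩
    set Λ : C(Sph n, ℝ) →ₗ[ℝ] ℝ :=
      { toFun := fun f => Ψ f e
        map_add' := fun f g => by simp only [map_add, ContinuousMap.add_apply]
        map_smul' := fun c f => by
          simp only [LinearMap.map_smul, ContinuousMap.smul_apply, smul_eq_mul,
            RingHom.id_apply] } with hΛdef
    have hΛpos : ∀ f : C(Sph n, ℝ), (∀ x, 0 ≤ f x) → 0 ≤ Λ f := fun f hf => hmono f hf e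
    set μ : Measure (Sph n) := rieszμ Λ hΛpos with hμdef
    haveI hfin : IsFiniteMeasure μ := rieszμ_finite Λ hΛpos
    have heq : ∀ f : C(Sph n, ℝ), Ψ f e = ∫ x, f x ∂μ := fun f =>
      rieszΛ_eq_integral Λ hΛpos f
    have hconv : ∀ (f : C(Sph n, ℝ)) (η : G), Ψ f (act η e) = ∫ u, f (act η u) ∂μ := by
      intro f η
      set g : C(Sph n, ℝ) := f.comp ⟨act η, hactcont η⟩ with hg
      have hge : ∀ u, g u = f (act η⁻¹⁻¹ u) := by
        intro u; simp [hg, inv_inv]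
      have h1 := hint η⁻¹ f g hge e
      rw [inv_inv] at h1
      rw [← h1, heq g]
      rfl
    refine ⟨μ, hfin, ?_, hconv⟩
    intro ϑ hϑ
    have hmeas : Measurable (act ϑ) := (hactcont ϑ).measurable
    haveI : IsFiniteMeasure (μ.map (act ϑ)) := by
      constructor
      rw [Measure.map_apply hmeas MeasurableSet.univ]
      exact measure_lt_top μ _
    have hreal : ∀ g : C(Sph n, ℝ), ∫ x, g x ∂(μ.map (act ϑ)) = ∫ x, g x ∂μ := by
      intro g
      rw [integral_map hmeas.aemeasurable g.continuous.aestronglyMeasurable]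
      have h1 := hconv g ϑ
      rw [hϑ] at h1
      rw [← h1, heq g]
    refine ext_of_forall_lintegral_eq_of_IsFiniteMeasure fun f => ?_
    set g : C(Sph n, ℝ) := ⟨fun x => (f x : ℝ), NNReal.continuous_coe.comp f.continuous⟩ with hg
    have hint1 : Integrable (fun x => ((f x : ℝ))) (μ.map (act ϑ)) :=
      g.continuous.integrable_of_hasCompactSupport ((isClosed_tsupport _).isCompact)
    have hint2 : Integrable (fun x => ((f x : ℝ))) μ :=
      g.continuous.integrable_of_hasCompactSupport ((isClosed_tsupport _).isCompact)
    rw [lintegral_coe_eq_integral _ hint1, lintegral_coe_eq_integral _ hint2]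
    congr 1
    exact hreal g
  · rintro ⟨μ, hfin, _, hconv⟩
    constructor
    · intro f hf u
      obtain ⟨η, rfl⟩ := htrans u
      rw [hconv]
      exact integral_nonneg fun v => hf _
    · intro ϑ f g hg u
      obtain ⟨η, rfl⟩ := htrans u
      have hfun : (fun v => g (act η v)) = fun v => f (act (ϑ⁻¹ * η) v) :=
        funext fun v => by rw [hg, hact_mul]
      calc Ψ g (act η e) = ∫ v, g (act η v) ∂μ := hconv g η
        _ = ∫ v, f (act (ϑ⁻¹ * η) v) ∂μ := by rw [hfun]
        _ = Ψ f (act (ϑ⁻¹ * η) e) := (hconv f (ϑ⁻¹ * η)).symm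
        _ = Ψ f (act ϑ⁻¹ (act η e)) := by rw [hact_mul]
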